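/- Let $G_k$ be the free product of $k+1$ cyclic groups of order 2 with $k \geq 1$. For every even positive integer $n$, there exists a normal subgroup of $G_k$ of index exactly $n$. -/

import Mathlib

/-- Relations making every generator an involution. -/
def sqRels (α : Type) : Set (FreeGroup α) :=
  Set.range (fun i => FreeGroup.of i * FreeGroup.of i)

/-- Free product of copies of ℤ/2 indexed by `α`. -/
abbrev FP2 (α : Type) := PresentedGroup (sqRels α)

/-- `G_k`: free product of `k+1` cyclic groups of order 2. -/
abbrev Gk (k : ℕ) := FP2 (Fin (k + 1))

/-- The generators `a_i`. -/
def gen {α : Type} (i : α) : FP2 α := PresentedGroup.of i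

lemma gen_mul_self {α : Type} (i : α) : gen i * gen i = 1 := by
  have h : (FreeGroup.of i * FreeGroup.of i) ∈ Subgroup.normalClosure (sqRels α) :=
    Subgroup.subset_normalClosure ⟨i, rfl⟩
  exact (QuotientGroup.eq_one_iff _).mpr h

lemma lift_sqRels {α : Type} {G : Type*} [Group G] (f : α → G)
    (hf : ∀ i, f i * f i = 1) : ∀ r ∈ sqRels α, FreeGroup.lift f r = 1 := by
  rintro r ⟨i, rfl⟩
  simpa using hf i

/-- for every even positive integer `n`, `G_k` (`k ≥ 1`) has a normal
subgroup of index exactly `n`. -/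
theorem stmt4 (k : ℕ) (hk : 1 ≤ k) (n : ℕ) (hn : 0 < n) (heven : Even n) :
    ∃ H : Subgroup (Gk k), H.Normal ∧ H.index = n := by
  obtain ⟨m, hm⟩ := heven
  have hm' : n = 2 * m := by omega
  have hmpos : 0 < m := by omega
  haveI : NeZero m := ⟨by omega⟩
  -- map to the dihedral group of order 2m
  set g : Fin (k + 1) → DihedralGroup m :=
    fun i => if i = 0 then DihedralGroup.sr 0 else DihedralGroup.sr 1 with hg
  have hinv : ∀ i, g i * g i = 1 := by
    intro i
    simp only [hg]
    split <;> simp [DihedralGroup.sr_mul_sr, DihedralGroup.one_def, -DihedralGroup.r_zero]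
  set f : Gk k →* DihedralGroup m := PresentedGroup.toGroup (lift_sqRels g hinv) with hf
  have h10 : (1 : Fin (k + 1)) ≠ 0 := by
    have : (1 : ℕ) < k + 1 := by omega
    simp [Fin.ext_iff, Nat.mod_eq_of_lt this]
  have hf0 : f (gen 0) = DihedralGroup.sr 0 := by
    simp [hf, gen, PresentedGroup.toGroup.of, hg]
  have hf1 : f (gen 1) = DihedralGroup.sr 1 := by
    simp [hf, gen, PresentedGroup.toGroup.of, hg, h10]
  have hr : ∀ j : ZMod m, f ((gen (0 : Fin (k+1)) * gen 1) ^ j.val) = DihedralGroup.r j := by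
    intro j
    have hr1 : f (gen (0 : Fin (k+1)) * gen 1) = DihedralGroup.r 1 := by
      rw [map_mul, hf0, hf1, DihedralGroup.sr_mul_sr]; norm_num
    have : ∀ t : ℕ, (DihedralGroup.r 1 : DihedralGroup m) ^ t = DihedralGroup.r t := by
      intro t
      induction t with
      | zero => simp [DihedralGroup.one_def, -DihedralGroup.r_zero]
      | succ s ih => rw [pow_succ, ih, DihedralGroup.r_mul_r]; push_cast; ring_nf
    rw [map_pow, hr1, this, ZMod.natCast_val, ZMod.cast_id]
  have hsurj : Function.Surjective f := by
    intro x
    cases x with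
    | r j => exact ⟨_, hr j⟩
    | sr j =>
      refine ⟨(gen (0 : Fin (k+1)) * gen 1) ^ (-j : ZMod m).val * gen 0, ?_⟩
      rw [map_mul, hr, hf0, DihedralGroup.r_mul_sr]
      ring_nf
  refine ⟨f.ker, MonoidHom.normal_ker f, ?_⟩
  have : f.ker.index = Nat.card f.range := Subgroup.index_ker f
  rw [this, MonoidHom.range_eq_top_of_surjective f hsurj]
  rw [Subgroup.card_top, DihedralGroup.nat_card, hm']
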